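/- Suppose that for every ε > 0 one has R(T) = O_ε(T^{1/2+ε}), i.e. there is C(ε) with |R(T)| ≤ C(ε) T^{1/2+ε} for all T ≥ 2. Then for every ε > 0 one has E*(T) = O_ε(T^{1/4+ε}); equivalently, E(T) = 2πΔ*(T/(2π)) + O_ε(T^{1/4+ε}). -/

import Mathlib

open Real MeasureTheory Finset

/-- Error term in the Dirichlet divisor problem. -/
noncomputable def divDelta (x : ℝ) : ℝ :=
  (∑ n ∈ Finset.Icc 1 ⌊x⌋₊, (n.divisors.card : ℝ))
    - x * (Real.log x + 2 * Real.eulerMascheroniConstant - 1)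

/-- Error term in the mean square of zeta on the critical line. -/
noncomputable def zetaE (T : ℝ) : ℝ :=
  (∫ t in (0:ℝ)..T, ‖riemannZeta (1/2 + Complex.I * t)‖ ^ 2)
    - T * (Real.log (T / (2 * Real.pi)) + 2 * Real.eulerMascheroniConstant - 1)

/-- The modified divisor error term Δ*. -/
noncomputable def divDeltaStar (x : ℝ) : ℝ :=
  -divDelta x + 2 * divDelta (2 * x) - (1/2) * divDelta (4 * x)

/-- E*(t) = E(t) - 2π Δ*(t/(2π)). -/
noncomputable def zetaEStar (t : ℝ) : ℝ :=
  zetaE t - 2 * Real.pi * divDeltaStar (t / (2 * Real.pi))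

/-- R(T), defined by ∫₀ᵀ E*(t) dt = (3π/4) T + R(T). -/
noncomputable def Rerr (T : ℝ) : ℝ :=
  (∫ t in (0:ℝ)..T, zetaEStar t) - 3 * Real.pi / 4 * T

noncomputable def divS (x : ℝ) : ℝ := ∑ n ∈ Finset.Icc 1 ⌊x⌋₊, (n.divisors.card : ℝ)

lemma divisor_bound {ε : ℝ} (hε : 0 < ε) :
    ∃ C : ℝ, 1 ≤ C ∧ ∀ n : ℕ, (n.divisors.card : ℝ) ≤ C * (n : ℝ) ^ ε := by
  set δ : ℝ := (2:ℝ) ^ ε - 1 with hδdef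
  have hδ : 0 < δ := by
    have : (1:ℝ) < (2:ℝ) ^ ε := by
      have := Real.one_lt_rpow_iff_of_pos (x := 2) (by norm_num) (y := ε)
      rw [this]; exact Or.inl ⟨by norm_num, hε⟩
    linarith
  set A : ℝ := max (2 / δ) 1 with hAdef
  have hA1 : (1:ℝ) ≤ A := le_max_right _ _
  set N : ℕ := ⌈(2:ℝ) ^ (1/ε)⌉₊ with hNdef
  refine ⟨A ^ N, one_le_pow₀ hA1, ?_⟩
  intro n
  rcases Nat.eq_zero_or_pos n with rfl | hn
  · simp [Real.zero_rpow hε.ne']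
  have hn0 : n ≠ 0 := hn.ne'
  -- key per-prime bound
  have key : ∀ p ∈ n.primeFactors,
      ((n.factorization p + 1 : ℕ) : ℝ)
        ≤ (if p < N then A else 1) * (((p ^ n.factorization p : ℕ) : ℝ)) ^ ε := by
    intro p hp
    have hpp : p.Prime := Nat.prime_of_mem_primeFactors hp
    have hp2 : (2:ℝ) ≤ (p:ℝ) := by exact_mod_cast hpp.two_le
    set a : ℕ := n.factorization p with hadef
    have ha : 1 ≤ a := (Nat.Prime.factorization_pos_of_dvd hpp hn0
      (Nat.dvd_of_mem_primeFactors hp))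
    have hpa : ((p ^ a : ℕ) : ℝ) = (p:ℝ) ^ (a:ℕ) := by push_cast; ring
    rw [hpa]
    by_cases hcase : p < N
    · rw [if_pos hcase]
      -- A * ((p:ℝ)^a)^ε ≥ (2/δ) * (1+δ)^a ≥ (2/δ) * a δ = 2a ≥ a+1
      have h1 : ((2:ℝ) ^ (a:ℕ)) ^ ε ≤ ((p:ℝ) ^ (a:ℕ)) ^ ε := by
        apply Real.rpow_le_rpow (by positivity) (pow_le_pow_left₀ (by norm_num) hp2 a) hε.le
      have h2 : ((2:ℝ) ^ (a:ℕ)) ^ ε = (1 + δ) ^ (a:ℕ) := by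
        rw [← Real.rpow_natCast (2:ℝ) a, ← Real.rpow_mul (by norm_num),
          mul_comm, Real.rpow_mul (by norm_num), Real.rpow_natCast]
        norm_num [hδdef]
      have h3 : (a:ℝ) * δ ≤ (1 + δ) ^ (a:ℕ) := by
        have := one_add_mul_le_pow (a := δ) (by linarith) a
        nlinarith
      have h4 : ((a:ℕ):ℝ) + 1 ≤ 2 * a := by
        have : (1:ℝ) ≤ (a:ℝ) := by exact_mod_cast ha
        linarith
      have h5 : (2 / δ) * ((a:ℝ) * δ) = 2 * a := by field_simp
      have h6 : (2/δ) ≤ A := le_max_left _ _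
      have hnn : (0:ℝ) ≤ (a:ℝ) * δ := by positivity
      calc ((a + 1 : ℕ):ℝ) = (a:ℝ) + 1 := by push_cast; ring
        _ ≤ 2 * a := h4
        _ = (2/δ) * ((a:ℝ) * δ) := h5.symm
        _ ≤ (2/δ) * ((1+δ)^(a:ℕ)) := by
            apply mul_le_mul_of_nonneg_left h3 (by positivity)
        _ ≤ A * ((1+δ)^(a:ℕ)) := by
            apply mul_le_mul_of_nonneg_right h6 (by positivity)
        _ = A * ((2:ℝ) ^ (a:ℕ)) ^ ε := by rw [h2]
        _ ≤ A * ((p:ℝ) ^ (a:ℕ)) ^ ε := by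
            apply mul_le_mul_of_nonneg_left h1 (by linarith)
    · rw [if_neg hcase, one_mul]
      -- p ≥ N so p^ε ≥ 2, then (p^a)^ε = (p^ε)^a ≥ 2^a ≥ a+1
      have hpN : (N:ℝ) ≤ (p:ℝ) := by exact_mod_cast Nat.not_lt.mp hcase
      have h2 : (2:ℝ) ≤ (p:ℝ) ^ ε := by
        have hceil : (2:ℝ) ^ (1/ε) ≤ (N:ℝ) := Nat.le_ceil _
        have : ((2:ℝ) ^ (1/ε)) ^ ε ≤ (p:ℝ) ^ ε :=
          Real.rpow_le_rpow (by positivity) (le_trans hceil hpN) hε.le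
        rwa [← Real.rpow_mul (by norm_num), one_div, inv_mul_cancel₀ hε.ne',
          Real.rpow_one] at this
      have h3 : ((p:ℝ) ^ (a:ℕ)) ^ ε = ((p:ℝ) ^ ε) ^ (a:ℕ) := by
        rw [← Real.rpow_natCast (p:ℝ) a, ← Real.rpow_mul (by positivity),
          mul_comm, Real.rpow_mul (by positivity), Real.rpow_natCast]
      have h4 : ((2:ℝ)) ^ (a:ℕ) ≤ ((p:ℝ) ^ ε) ^ (a:ℕ) :=
        pow_le_pow_left₀ (by norm_num) h2 a
      have h5 : ((a:ℝ) + 1) ≤ (2:ℝ) ^ (a:ℕ) := by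
        have := (Nat.lt_two_pow_self : a < 2 ^ a)
        have : (a:ℝ) + 1 ≤ ((2 ^ a : ℕ) : ℝ) := by exact_mod_cast this
        simpa using this
      calc ((a + 1 : ℕ):ℝ) = (a:ℝ) + 1 := by push_cast; ring
        _ ≤ (2:ℝ) ^ (a:ℕ) := h5
        _ ≤ ((p:ℝ) ^ ε) ^ (a:ℕ) := h4
        _ = ((p:ℝ) ^ (a:ℕ)) ^ ε := h3.symm
  -- assemble
  have hcard : (n.divisors.card : ℝ)
      = ∏ p ∈ n.primeFactors, ((n.factorization p + 1 : ℕ) : ℝ) := by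
    rw [Nat.card_divisors hn0]
    push_cast
    rfl
  have hfact : (n:ℝ) = ∏ p ∈ n.primeFactors, ((p ^ n.factorization p : ℕ) : ℝ) := by
    conv_lhs => rw [← Nat.factorization_prod_pow_eq_self hn0]
    rw [Nat.prod_factorization_eq_prod_primeFactors]
    push_cast
    rfl
  have hrpow : (n:ℝ) ^ ε
      = ∏ p ∈ n.primeFactors, (((p ^ n.factorization p : ℕ) : ℝ)) ^ ε := by
    rw [hfact, ← Real.finset_prod_rpow _ _ (fun i _ => by positivity)]
  have hmain : (n.divisors.card : ℝ)
      ≤ ∏ p ∈ n.primeFactors,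
          ((if p < N then A else 1) * (((p ^ n.factorization p : ℕ) : ℝ)) ^ ε) := by
    rw [hcard]
    apply Finset.prod_le_prod (fun i _ => by positivity) key
  rw [Finset.prod_mul_distrib] at hmain
  have hW : (∏ p ∈ n.primeFactors, (if p < N then A else 1)) ≤ A ^ N := by
    rw [← Finset.prod_filter_mul_prod_filter_not n.primeFactors (· < N)]
    have h1 : (∏ p ∈ n.primeFactors.filter (· < N), (if p < N then A else 1))
        = ∏ p ∈ n.primeFactors.filter (· < N), A := by
      apply Finset.prod_congr rfl
      intro p hp
      simp [(Finset.mem_filter.mp hp).2]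
    have h2 : (∏ p ∈ n.primeFactors.filter (¬ · < N), (if p < N then A else 1)) = 1 := by
      apply Finset.prod_eq_one
      intro p hp
      simp [(Finset.mem_filter.mp hp).2]
    rw [h1, h2, mul_one, Finset.prod_const]
    apply pow_le_pow_right₀ hA1
    calc (n.primeFactors.filter (· < N)).card ≤ (Finset.range N).card := by
          apply Finset.card_le_card
          intro p hp
          simpa using (Finset.mem_filter.mp hp).2
      _ = N := Finset.card_range N
  calc (n.divisors.card : ℝ)
      ≤ (∏ p ∈ n.primeFactors, (if p < N then A else 1))
        * ∏ p ∈ n.primeFactors, (((p ^ n.factorization p : ℕ) : ℝ)) ^ ε := hmain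
    _ ≤ A ^ N * ∏ p ∈ n.primeFactors, (((p ^ n.factorization p : ℕ) : ℝ)) ^ ε := by
        apply mul_le_mul_of_nonneg_right hW
        apply Finset.prod_nonneg; intro i _; positivity
    _ = A ^ N * (n:ℝ) ^ ε := by rw [hrpow]

lemma divDelta_eq (x : ℝ) :
    divDelta x = divS x - x * (Real.log x + 2 * Real.eulerMascheroniConstant - 1) := rfl

lemma divS_mono : Monotone divS := by
  intro x y hxy
  apply Finset.sum_le_sum_of_subset_of_nonneg
  · exact Finset.Icc_subset_Icc le_rfl (Nat.floor_mono hxy)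
  · intro i _ _; positivity

lemma divS_nonneg (x : ℝ) : 0 ≤ divS x := Finset.sum_nonneg fun i _ => by positivity

lemma divS_sub_le {C ε : ℝ} (hε : 0 < ε) (hC0 : 0 ≤ C)
    (hC : ∀ n : ℕ, (n.divisors.card : ℝ) ≤ C * (n : ℝ) ^ ε)
    {x y : ℝ} (hx : 0 ≤ x) (hxy : x ≤ y) :
    divS y - divS x ≤ (y - x + 1) * (C * y ^ ε) := by
  have hy : 0 ≤ y := hx.trans hxy
  have hab : ⌊x⌋₊ ≤ ⌊y⌋₊ := Nat.floor_mono hxy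
  have hsplit : divS y - divS x = ∑ n ∈ Finset.Ioc ⌊x⌋₊ ⌊y⌋₊, (n.divisors.card : ℝ) := by
    unfold divS
    rw [show (1:ℕ) = 0 + 1 from rfl, Finset.Icc_add_one_left_eq_Ioc, Finset.Icc_add_one_left_eq_Ioc]
    rw [← Finset.sum_Ioc_consecutive _ (Nat.zero_le _) hab]
    ring
  rw [hsplit]
  have hterm : ∀ n ∈ Finset.Ioc ⌊x⌋₊ ⌊y⌋₊, (n.divisors.card : ℝ) ≤ C * y ^ ε := by
    intro n hn
    have hny : (n : ℝ) ≤ y := by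
      have : n ≤ ⌊y⌋₊ := (Finset.mem_Ioc.mp hn).2
      exact le_trans (by exact_mod_cast this) (Nat.floor_le hy)
    calc (n.divisors.card : ℝ) ≤ C * (n : ℝ) ^ ε := hC n
      _ ≤ C * y ^ ε := by
          apply mul_le_mul_of_nonneg_left _ hC0
          exact Real.rpow_le_rpow (by positivity) hny hε.le
  calc (∑ n ∈ Finset.Ioc ⌊x⌋₊ ⌊y⌋₊, (n.divisors.card : ℝ))
      ≤ (Finset.Ioc ⌊x⌋₊ ⌊y⌋₊).card * (C * y ^ ε) := by
        simpa using Finset.sum_le_card_nsmul _ _ _ hterm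
    _ ≤ (y - x + 1) * (C * y ^ ε) := by
        apply mul_le_mul_of_nonneg_right _ (by positivity)
        rw [Nat.card_Ioc]
        have h1 : ((⌊y⌋₊ - ⌊x⌋₊ : ℕ) : ℝ) = (⌊y⌋₊ : ℝ) - (⌊x⌋₊ : ℝ) := by
          rw [Nat.cast_sub hab]
        rw [h1]
        have h2 : (⌊y⌋₊ : ℝ) ≤ y := Nat.floor_le hy
        have h3 : x < (⌊x⌋₊ : ℝ) + 1 := Nat.lt_floor_add_one x
        linarith

lemma drift_bound (c : ℝ) {x y : ℝ} (hx : 0 < x) (hxy : x ≤ y) :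
    |y * (Real.log y + c) - x * (Real.log x + c)|
      ≤ (y - x) * (|Real.log y| + 1 + |c|) := by
  have hy : 0 < y := hx.trans_le hxy
  have hid : y * (Real.log y + c) - x * (Real.log x + c)
      = (y - x) * (Real.log y + c) + x * (Real.log y - Real.log x) := by ring
  have h1 : 0 ≤ Real.log y - Real.log x := sub_nonneg.mpr (Real.log_le_log hx hxy)
  have h2 : x * (Real.log y - Real.log x) ≤ y - x := by
    have hlog : Real.log y - Real.log x = Real.log (y / x) := (Real.log_div hy.ne' hx.ne').symm
    rw [hlog]
    have := Real.log_le_sub_one_of_pos (show 0 < y / x by positivity)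
    calc x * Real.log (y / x) ≤ x * (y / x - 1) :=
          mul_le_mul_of_nonneg_left this hx.le
      _ = y - x := by field_simp
  have h3 : |(y - x) * (Real.log y + c)| ≤ (y - x) * (|Real.log y| + |c|) := by
    rw [abs_mul, abs_of_nonneg (by linarith : (0:ℝ) ≤ y - x)]
    exact mul_le_mul_of_nonneg_left (abs_add_le _ _) (by linarith)
  calc |y * (Real.log y + c) - x * (Real.log x + c)|
      = |(y - x) * (Real.log y + c) + x * (Real.log y - Real.log x)| := by rw [hid]
    _ ≤ |(y - x) * (Real.log y + c)| + |x * (Real.log y - Real.log x)| := abs_add_le _ _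
    _ ≤ (y - x) * (|Real.log y| + |c|) + (y - x) := by
        have h4 : |x * (Real.log y - Real.log x)| ≤ y - x := by
          rw [abs_of_nonneg (by positivity)]
          exact h2
        linarith
    _ = (y - x) * (|Real.log y| + 1 + |c|) := by ring

lemma divDelta_sub_le {C ε : ℝ} (hε : 0 < ε) (hC0 : 0 ≤ C)
    (hC : ∀ n : ℕ, (n.divisors.card : ℝ) ≤ C * (n : ℝ) ^ ε)
    {x y : ℝ} (hx : 1 ≤ x) (hxy : x ≤ y) :
    |divDelta y - divDelta x| ≤ (y - x + 1) * (C * y ^ ε)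
      + (y - x) * (Real.log y + 1 + |2 * Real.eulerMascheroniConstant - 1|) := by
  have hy : 1 ≤ y := hx.trans hxy
  have hx0 : (0:ℝ) < x := by linarith
  have hdd : ∀ z : ℝ, divDelta z = divS z
      - z * (Real.log z + (2 * Real.eulerMascheroniConstant - 1)) := by
    intro z; unfold divDelta divS; ring_nf
  have h1 : 0 ≤ divS y - divS x := sub_nonneg.mpr (divS_mono hxy)
  have h2 : divS y - divS x ≤ (y - x + 1) * (C * y ^ ε) :=
    divS_sub_le hε hC0 hC (by linarith) hxy
  have h3 := drift_bound (2 * Real.eulerMascheroniConstant - 1) hx0 hxy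
  have hlogy : |Real.log y| = Real.log y := abs_of_nonneg (Real.log_nonneg hy)
  rw [hlogy] at h3
  have hid : divDelta y - divDelta x = (divS y - divS x)
      - (y * (Real.log y + (2 * Real.eulerMascheroniConstant - 1))
        - x * (Real.log x + (2 * Real.eulerMascheroniConstant - 1))) := by
    rw [hdd y, hdd x]; ring
  rw [hid]
  calc |(divS y - divS x) - _| ≤ |divS y - divS x| + |_| := abs_sub _ _
    _ ≤ (y - x + 1) * (C * y ^ ε)
        + (y - x) * (Real.log y + 1 + |2 * Real.eulerMascheroniConstant - 1|) := by
        apply add_le_add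
        · rwa [abs_of_nonneg h1]
        · exact h3

lemma divDeltaStar_sub_le {C ε : ℝ} (hε : 0 < ε) (hC0 : 0 ≤ C)
    (hC : ∀ n : ℕ, (n.divisors.card : ℝ) ≤ C * (n : ℝ) ^ ε)
    {x y : ℝ} (hx : 1 ≤ x) (hxy : x ≤ y) :
    |divDeltaStar y - divDeltaStar x|
      ≤ 4 * ((4 * (y - x) + 1) * (C * (4 * y) ^ ε)
        + 4 * (y - x) * (Real.log (4 * y) + 1 + |2 * Real.eulerMascheroniConstant - 1|)) := by
  have hy : 1 ≤ y := hx.trans hxy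
  set c₂ := |2 * Real.eulerMascheroniConstant - 1| with hc₂
  have hc₂0 : 0 ≤ c₂ := abs_nonneg _
  -- bound for each scale k ∈ {1,2,4}
  have hk : ∀ k : ℝ, 1 ≤ k → k ≤ 4 →
      |divDelta (k * y) - divDelta (k * x)|
        ≤ (4 * (y - x) + 1) * (C * (4 * y) ^ ε)
          + 4 * (y - x) * (Real.log (4 * y) + 1 + c₂) := by
    intro k hk1 hk4
    have hkx : 1 ≤ k * x := by nlinarith
    have hkxy : k * x ≤ k * y := by nlinarith
    have h := divDelta_sub_le hε hC0 hC hkx hkxy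
    have e1 : k * y - k * x = k * (y - x) := by ring
    have hbd1 : (k * y - k * x + 1) * (C * (k * y) ^ ε)
        ≤ (4 * (y - x) + 1) * (C * (4 * y) ^ ε) := by
      apply mul_le_mul
      · rw [e1]; nlinarith
      · apply mul_le_mul_of_nonneg_left _ hC0
        apply Real.rpow_le_rpow (by positivity) (by nlinarith) hε.le
      · positivity
      · nlinarith
    have hbd2 : (k * y - k * x) * (Real.log (k * y) + 1 + c₂)
        ≤ 4 * (y - x) * (Real.log (4 * y) + 1 + c₂) := by
      have hlog : Real.log (k * y) ≤ Real.log (4 * y) := by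
        apply Real.log_le_log (by positivity) (by nlinarith)
      have hlog0 : 0 ≤ Real.log (k * y) := Real.log_nonneg (by nlinarith)
      apply mul_le_mul
      · rw [e1]; nlinarith
      · linarith
      · linarith
      · nlinarith
    linarith [h, hbd1, hbd2]
  set B := (4 * (y - x) + 1) * (C * (4 * y) ^ ε)
      + 4 * (y - x) * (Real.log (4 * y) + 1 + c₂) with hB
  have h1 := hk 1 le_rfl (by norm_num)
  have h2 := hk 2 (by norm_num) (by norm_num)
  have h4 := hk 4 (by norm_num) (by norm_num)
  simp only [one_mul] at h1
  have hB0 : 0 ≤ B := le_trans (abs_nonneg _) h1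
  have hid : divDeltaStar y - divDeltaStar x
      = (-(divDelta y - divDelta x) + 2 * (divDelta (2*y) - divDelta (2*x)))
        + (-(1/2)) * (divDelta (4*y) - divDelta (4*x)) := by
    unfold divDeltaStar; ring
  rw [hid]
  calc |(-(divDelta y - divDelta x) + 2 * (divDelta (2*y) - divDelta (2*x)))
        + (-(1/2)) * (divDelta (4*y) - divDelta (4*x))|
      ≤ |(-(divDelta y - divDelta x) + 2 * (divDelta (2*y) - divDelta (2*x)))|
        + |(-(1/2)) * (divDelta (4*y) - divDelta (4*x))| := abs_add_le _ _
    _ ≤ (|-(divDelta y - divDelta x)| + |2 * (divDelta (2*y) - divDelta (2*x))|)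
        + |(-(1/2)) * (divDelta (4*y) - divDelta (4*x))| := by
        gcongr; exact abs_add_le _ _
    _ = |divDelta y - divDelta x| + 2 * |divDelta (2*y) - divDelta (2*x)|
        + (1/2) * |divDelta (4*y) - divDelta (4*x)| := by
        rw [abs_neg, abs_mul, abs_mul]
        norm_num
    _ ≤ B + 2 * B + (1/2) * B := by gcongr
    _ ≤ 4 * B := by linarith

/-- the integrand |ζ(1/2+it)|² is continuous -/
lemma zetaSq_continuous :
    Continuous fun t : ℝ => ‖riemannZeta (1/2 + Complex.I * t)‖ ^ 2 := by
  rw [continuous_iff_continuousAt]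
  intro t
  have hne : (1/2 : ℂ) + Complex.I * t ≠ 1 := by
    intro h
    apply_fun Complex.re at h
    simp [Complex.add_re, Complex.mul_re] at h
  have hz : ContinuousAt riemannZeta ((1/2 : ℂ) + Complex.I * t) :=
    (differentiableAt_riemannZeta hne).continuousAt
  have hmap : Continuous fun s : ℝ => (1/2 : ℂ) + Complex.I * s := by
    fun_prop
  have h2 : ContinuousAt (fun s : ℝ => riemannZeta ((1/2 : ℂ) + Complex.I * s)) t :=
    ContinuousAt.comp (g := riemannZeta)
      (f := fun s : ℝ => (1/2 : ℂ) + Complex.I * s) hz (hmap.continuousAt (x := t))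
  exact (continuous_norm.continuousAt.comp h2).pow 2

lemma zetaE_continuous : Continuous zetaE := by
  unfold zetaE
  apply Continuous.sub
  · exact intervalIntegral.continuous_primitive
      (fun a b => (zetaSq_continuous).intervalIntegrable a b) 0
  · -- T * (log (T / (2π)) + 2γ - 1) = 2π * ((T/2π) * log (T/2π)) + (2γ-1) * T
    have hπ : (0:ℝ) < 2 * Real.pi := by positivity
    have hfun : (fun T : ℝ => T * (Real.log (T / (2 * Real.pi))
        + 2 * Real.eulerMascheroniConstant - 1))
        = fun T : ℝ => 2 * Real.pi * ((T / (2 * Real.pi)) * Real.log (T / (2 * Real.pi)))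
          + (2 * Real.eulerMascheroniConstant - 1) * T := by
      funext T
      field_simp
      ring
    rw [hfun]
    apply Continuous.add
    · exact continuous_const.mul (Real.continuous_mul_log.comp
        (continuous_id.div_const _))
    · exact continuous_const.mul continuous_id

lemma divDelta_comp_II (a : ℝ) (ha : 0 < a) (u v : ℝ) :
    IntervalIntegrable (fun t : ℝ => divDelta (a * t)) volume u v := by
  have hdd : (fun t : ℝ => divDelta (a * t))
      = fun t : ℝ => divS (a * t)
        - ((a * t) * Real.log (a * t)
          + (2 * Real.eulerMascheroniConstant - 1) * (a * t)) := by
    funext t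
    unfold divDelta divS
    ring
  rw [hdd]
  apply IntervalIntegrable.sub
  · apply Monotone.intervalIntegrable
    exact divS_mono.comp (fun s t hst => by nlinarith)
  · apply Continuous.intervalIntegrable
    apply Continuous.add
    · exact Real.continuous_mul_log.comp (continuous_const.mul continuous_id)
    · exact continuous_const.mul (continuous_const.mul continuous_id)

lemma zetaEStar_II (u v : ℝ) : IntervalIntegrable zetaEStar volume u v := by
  have hπ : (0:ℝ) < 2 * Real.pi := by positivity
  have hdd : zetaEStar = fun t : ℝ => zetaE t
      - 2 * Real.pi * (-divDelta ((1 / (2*Real.pi)) * t)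
        + 2 * divDelta ((2 / (2*Real.pi)) * t) - (1/2) * divDelta ((4 / (2*Real.pi)) * t)) := by
    funext t
    unfold zetaEStar divDeltaStar
    have e1 : (1 / (2*Real.pi)) * t = t / (2 * Real.pi) := by ring
    have e2 : (2 / (2*Real.pi)) * t = 2 * (t / (2 * Real.pi)) := by ring
    have e3 : (4 / (2*Real.pi)) * t = 4 * (t / (2 * Real.pi)) := by ring
    rw [e1, e2, e3]
  rw [hdd]
  apply IntervalIntegrable.sub
  · exact zetaE_continuous.intervalIntegrable u v
  · apply IntervalIntegrable.const_mul
    apply IntervalIntegrable.sub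
    apply IntervalIntegrable.add
    · exact (divDelta_comp_II _ (by positivity) u v).neg
    · exact (divDelta_comp_II _ (by positivity) u v).const_mul _
    · exact (divDelta_comp_II _ (by positivity) u v).const_mul _

/-- splitting the Rerr integral -/
lemma integral_zetaEStar_split {s t : ℝ} :
    ∫ x in s..t, zetaEStar x = Rerr t - Rerr s + 3 * Real.pi / 4 * (t - s) := by
  have h := intervalIntegral.integral_add_adjacent_intervals
    (zetaEStar_II 0 s) (zetaEStar_II s t)
  unfold Rerr
  linarith

/-- monotonicity of the primitive of |ζ|² -/
lemma zetaInt_mono {s t : ℝ} (hs : 0 ≤ s) (hst : s ≤ t) :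
    (∫ x in (0:ℝ)..s, ‖riemannZeta (1/2 + Complex.I * x)‖ ^ 2)
      ≤ ∫ x in (0:ℝ)..t, ‖riemannZeta (1/2 + Complex.I * x)‖ ^ 2 := by
  have h := intervalIntegral.integral_add_adjacent_intervals
    (zetaSq_continuous.intervalIntegrable (μ := volume) 0 s) (zetaSq_continuous.intervalIntegrable (μ := volume) s t)
  have hnn : 0 ≤ ∫ x in s..t, ‖riemannZeta (1/2 + Complex.I * x)‖ ^ 2 :=
    intervalIntegral.integral_nonneg hst (fun u _ => by positivity)
  linarith

/-- one-sided variation of zetaE -/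
lemma zetaE_sub_le {s t : ℝ} (hs : 0 ≤ s) (hst : s ≤ t) :
    zetaE s - zetaE t ≤ t * (Real.log (t / (2*Real.pi)) + 2 * Real.eulerMascheroniConstant - 1)
      - s * (Real.log (s / (2*Real.pi)) + 2 * Real.eulerMascheroniConstant - 1) := by
  have := zetaInt_mono hs hst
  unfold zetaE
  linarith

/-- variation of the zetaE main term -/
lemma m_var {s t : ℝ} (hs : 0 < s) (hst : s ≤ t) :
    |t * (Real.log (t / (2*Real.pi)) + 2 * Real.eulerMascheroniConstant - 1)
      - s * (Real.log (s / (2*Real.pi)) + 2 * Real.eulerMascheroniConstant - 1)|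
      ≤ (t - s) * (|Real.log (t / (2*Real.pi))| + 1
          + |2 * Real.eulerMascheroniConstant - 1|) := by
  have hπ : (0:ℝ) < 2 * Real.pi := by positivity
  have hxy : s / (2*Real.pi) ≤ t / (2*Real.pi) := by
    gcongr
  have h := drift_bound (2 * Real.eulerMascheroniConstant - 1)
    (x := s / (2*Real.pi)) (y := t / (2*Real.pi)) (by positivity) hxy
  have e : t * (Real.log (t / (2*Real.pi)) + 2 * Real.eulerMascheroniConstant - 1)
      - s * (Real.log (s / (2*Real.pi)) + 2 * Real.eulerMascheroniConstant - 1)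
      = 2 * Real.pi * ((t / (2*Real.pi)) * (Real.log (t / (2*Real.pi))
          + (2 * Real.eulerMascheroniConstant - 1))
        - (s / (2*Real.pi)) * (Real.log (s / (2*Real.pi))
          + (2 * Real.eulerMascheroniConstant - 1))) := by
    field_simp
    ring
  rw [e, abs_mul, abs_of_pos hπ]
  calc 2 * Real.pi * |_| ≤ 2 * Real.pi * ((t / (2*Real.pi) - s / (2*Real.pi))
        * (|Real.log (t / (2*Real.pi))| + 1 + |2 * Real.eulerMascheroniConstant - 1|)) := by
        apply mul_le_mul_of_nonneg_left h hπ.le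
    _ = (t - s) * (|Real.log (t / (2*Real.pi))| + 1
          + |2 * Real.eulerMascheroniConstant - 1|) := by
        field_simp

lemma card_divisors_le_self (n : ℕ) : (n.divisors.card : ℝ) ≤ (n : ℝ) := by
  have h : n.divisors ⊆ Finset.Icc 1 n := by
    intro d hd
    obtain ⟨hdvd, hn0⟩ := Nat.mem_divisors.mp hd
    have hd0 : 0 < d := Nat.pos_of_dvd_of_pos hdvd (Nat.pos_of_ne_zero hn0)
    exact Finset.mem_Icc.mpr ⟨hd0, Nat.le_of_dvd (Nat.pos_of_ne_zero hn0) hdvd⟩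
  have := Finset.card_le_card h
  rw [Nat.card_Icc] at this
  exact_mod_cast le_trans this (by omega)

lemma divS_le_sq {v : ℝ} (hv : 0 ≤ v) : divS v ≤ v ^ 2 := by
  unfold divS
  calc (∑ n ∈ Finset.Icc 1 ⌊v⌋₊, (n.divisors.card : ℝ))
      ≤ ∑ n ∈ Finset.Icc 1 ⌊v⌋₊, (⌊v⌋₊ : ℝ) := by
        apply Finset.sum_le_sum
        intro n hn
        calc (n.divisors.card : ℝ) ≤ (n:ℝ) := card_divisors_le_self n
          _ ≤ (⌊v⌋₊ : ℝ) := by exact_mod_cast (Finset.mem_Icc.mp hn).2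
    _ = (Finset.Icc 1 ⌊v⌋₊).card * (⌊v⌋₊ : ℝ) := by rw [Finset.sum_const]; ring
    _ ≤ (⌊v⌋₊ : ℝ) * (⌊v⌋₊ : ℝ) := by
        apply mul_le_mul_of_nonneg_right _ (by positivity)
        rw [Nat.card_Icc]
        simp
    _ ≤ v ^ 2 := by
        have := Nat.floor_le hv
        nlinarith
lemma abs_log_le {u L : ℝ} (hL : 1 ≤ L) (h1 : 1/L ≤ u) (h2 : u ≤ L) :
    |Real.log u| ≤ Real.log L := by
  have hL0 : (0:ℝ) < L := by linarith
  have hu : 0 < u := lt_of_lt_of_le (by positivity) h1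
  rw [abs_le]
  constructor
  · have := Real.log_le_log (by positivity : (0:ℝ) < 1/L) h1
    rwa [one_div, Real.log_inv] at this
  · exact Real.log_le_log hu h2

lemma log_le_rpow_div1 {T ε : ℝ} (hT : 0 < T) (hε : 0 < ε) :
    Real.log T ≤ T ^ ε / ε := by
  have h1 : Real.log (T ^ ε) = ε * Real.log T := Real.log_rpow hT ε
  have h2 : Real.log (T ^ ε) ≤ T ^ ε - 1 := Real.log_le_sub_one_of_pos (by positivity)
  have h3 : ε * Real.log T ≤ T ^ ε := by linarith
  rw [le_div_iff₀ hε]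
  linarith

/-- crude bound for divDelta on a middle range -/
lemma divDelta_crude {v : ℝ} (h1 : 1/8 ≤ v) (h2 : v ≤ 11) :
    |divDelta v| ≤ 121 + 11 * (Real.log 11 + 1 + |2 * Real.eulerMascheroniConstant - 1|) := by
  have hv : (0:ℝ) < v := by linarith
  have hdd : divDelta v = divS v
      - v * (Real.log v + (2 * Real.eulerMascheroniConstant - 1)) := by
    unfold divDelta divS; ring_nf
  have hS0 : 0 ≤ divS v := Finset.sum_nonneg fun i _ => by positivity
  have hSsq : divS v ≤ 121 := le_trans (divS_le_sq hv.le) (by nlinarith)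
  have hlog : |Real.log v| ≤ Real.log 11 := abs_log_le (by norm_num) (by linarith) h2
  have hm : |v * (Real.log v + (2 * Real.eulerMascheroniConstant - 1))|
      ≤ 11 * (Real.log 11 + 1 + |2 * Real.eulerMascheroniConstant - 1|) := by
    rw [abs_mul, abs_of_pos hv]
    have h3 : |Real.log v + (2 * Real.eulerMascheroniConstant - 1)|
        ≤ Real.log 11 + 1 + |2 * Real.eulerMascheroniConstant - 1| := by
      have := abs_add_le (Real.log v) (2 * Real.eulerMascheroniConstant - 1)
      have hl11 : (0:ℝ) ≤ Real.log 11 := Real.log_nonneg (by norm_num)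
      linarith
    have h4 : (0:ℝ) ≤ Real.log 11 + 1 + |2 * Real.eulerMascheroniConstant - 1| := by
      have hl11 : (0:ℝ) ≤ Real.log 11 := Real.log_nonneg (by norm_num)
      have := abs_nonneg (2 * Real.eulerMascheroniConstant - 1)
      linarith
    calc v * |Real.log v + (2 * Real.eulerMascheroniConstant - 1)|
        ≤ 11 * |Real.log v + (2 * Real.eulerMascheroniConstant - 1)| := by
          apply mul_le_mul_of_nonneg_right h2 (abs_nonneg _)
      _ ≤ 11 * (Real.log 11 + 1 + |2 * Real.eulerMascheroniConstant - 1|) := by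
          apply mul_le_mul_of_nonneg_left h3 (by norm_num)
  rw [hdd]
  calc |divS v - v * (Real.log v + (2 * Real.eulerMascheroniConstant - 1))|
      ≤ |divS v| + |v * (Real.log v + (2 * Real.eulerMascheroniConstant - 1))| := abs_sub _ _
    _ ≤ 121 + 11 * (Real.log 11 + 1 + |2 * Real.eulerMascheroniConstant - 1|) := by
        rw [abs_of_nonneg hS0]
        exact add_le_add hSsq hm

lemma zetaEStar_crude : ∃ M : ℝ, 0 ≤ M ∧ ∀ T : ℝ, 2 ≤ T → T ≤ 16 → |zetaEStar T| ≤ M := by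
  set c₂ := |2 * Real.eulerMascheroniConstant - 1| with hc2
  have hc₂0 : 0 ≤ c₂ := abs_nonneg _
  set K := ∫ x in (0:ℝ)..16, ‖riemannZeta (1/2 + Complex.I * x)‖ ^ 2 with hK
  have hK0 : 0 ≤ K :=
    intervalIntegral.integral_nonneg (by norm_num) (fun u _ => by positivity)
  set M₁ := 121 + 11 * (Real.log 11 + 1 + c₂) with hM₁
  have hM₁0 : 0 ≤ M₁ := by
    have : (0:ℝ) ≤ Real.log 11 := Real.log_nonneg (by norm_num)
    rw [hM₁]; positivity
  have hlog8 : (0:ℝ) ≤ Real.log 8 := Real.log_nonneg (by norm_num)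
  refine ⟨K + 16 * (Real.log 8 + 1 + c₂) + 2 * Real.pi * (4 * M₁), by positivity, ?_⟩
  intro T hT2 hT16
  have hπ3 : (3:ℝ) < Real.pi := Real.pi_gt_three
  have hπ4 : Real.pi ≤ 4 := Real.pi_le_four
  have hT0 : (0:ℝ) < T := by linarith
  -- bound on zetaE
  have hI0 : 0 ≤ ∫ x in (0:ℝ)..T, ‖riemannZeta (1/2 + Complex.I * x)‖ ^ 2 :=
    intervalIntegral.integral_nonneg (by linarith) (fun u _ => by positivity)
  have hIK : (∫ x in (0:ℝ)..T, ‖riemannZeta (1/2 + Complex.I * x)‖ ^ 2) ≤ K :=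
    zetaInt_mono (by linarith) hT16
  have hlogT : |Real.log (T / (2 * Real.pi))| ≤ Real.log 8 := by
    apply abs_log_le (by norm_num)
    · rw [div_le_div_iff₀ (by norm_num) (by positivity)]
      nlinarith
    · rw [div_le_iff₀ (by positivity)]
      nlinarith
  have hzE : |zetaE T| ≤ K + 16 * (Real.log 8 + 1 + c₂) := by
    unfold zetaE
    have habs : |T * (Real.log (T / (2 * Real.pi)) + 2 * Real.eulerMascheroniConstant - 1)|
        ≤ 16 * (Real.log 8 + 1 + c₂) := by
      rw [abs_mul, abs_of_pos hT0]
      have h1 : |Real.log (T / (2 * Real.pi)) + 2 * Real.eulerMascheroniConstant - 1|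
          ≤ Real.log 8 + 1 + c₂ := by
        have h2 : Real.log (T / (2 * Real.pi)) + 2 * Real.eulerMascheroniConstant - 1
            = Real.log (T / (2 * Real.pi)) + (2 * Real.eulerMascheroniConstant - 1) := by ring
        rw [h2]
        calc |Real.log (T / (2 * Real.pi)) + (2 * Real.eulerMascheroniConstant - 1)|
            ≤ |Real.log (T / (2 * Real.pi))| + c₂ := abs_add_le _ _
          _ ≤ Real.log 8 + 1 + c₂ := by linarith
      calc T * |Real.log (T / (2 * Real.pi)) + 2 * Real.eulerMascheroniConstant - 1|
          ≤ 16 * |Real.log (T / (2 * Real.pi)) + 2 * Real.eulerMascheroniConstant - 1| :=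
            mul_le_mul_of_nonneg_right hT16 (abs_nonneg _)
        _ ≤ 16 * (Real.log 8 + 1 + c₂) := mul_le_mul_of_nonneg_left h1 (by norm_num)
    set I := ∫ x in (0:ℝ)..T, ‖riemannZeta (1/2 + Complex.I * x)‖ ^ 2
    calc |I - T * (Real.log (T / (2 * Real.pi)) + 2 * Real.eulerMascheroniConstant - 1)|
        ≤ |I| + |T * (Real.log (T / (2 * Real.pi)) + 2 * Real.eulerMascheroniConstant - 1)| :=
          abs_sub _ _
      _ ≤ K + 16 * (Real.log 8 + 1 + c₂) := by
          rw [abs_of_nonneg hI0]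
          exact add_le_add hIK habs
  -- bound on divDeltaStar part
  set x := T / (2 * Real.pi) with hx
  have hx18 : 1/8 ≤ x := by
    rw [hx, le_div_iff₀ (by positivity)]
    nlinarith
  have hx4 : 4 * x ≤ 11 := by
    rw [hx, show 4*(T/(2*Real.pi)) = (4*T)/(2*Real.pi) by ring,
      div_le_iff₀ (by positivity)]
    nlinarith
  have hx0 : 0 < x := by positivity
  have hd1 : |divDelta x| ≤ M₁ := divDelta_crude hx18 (by linarith)
  have hd2 : |divDelta (2*x)| ≤ M₁ := divDelta_crude (by linarith) (by linarith)
  have hd4 : |divDelta (4*x)| ≤ M₁ := divDelta_crude (by linarith) (by linarith)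
  have hds : |divDeltaStar x| ≤ 4 * M₁ := by
    unfold divDeltaStar
    have e1 := abs_le.mp hd1
    have e2 := abs_le.mp hd2
    have e4 := abs_le.mp hd4
    rw [abs_le]
    constructor <;> [linarith [e1.1, e1.2, e2.1, e2.2, e4.1, e4.2];
      linarith [e1.1, e1.2, e2.1, e2.2, e4.1, e4.2]]
  -- combine
  unfold zetaEStar
  calc |zetaE T - 2 * Real.pi * divDeltaStar (T / (2 * Real.pi))|
      ≤ |zetaE T| + |2 * Real.pi * divDeltaStar (T / (2 * Real.pi))| := abs_sub _ _
    _ ≤ (K + 16 * (Real.log 8 + 1 + c₂)) + 2 * Real.pi * (4 * M₁) := by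
        apply add_le_add hzE
        rw [abs_mul, abs_of_pos (by positivity : (0:ℝ) < 2 * Real.pi)]
        exact mul_le_mul_of_nonneg_left hds (by positivity)

set_option maxHeartbeats 2000000 in
theorem R_conjecture_implies_EStar_bound
    (h : ∀ ε : ℝ, 0 < ε → ∃ C : ℝ, 0 < C ∧ ∀ T : ℝ, 2 ≤ T →
      |Rerr T| ≤ C * T ^ (1/2 + ε : ℝ)) :
    ∀ ε : ℝ, 0 < ε → ∃ C : ℝ, 0 < C ∧ ∀ T : ℝ, 2 ≤ T →
      |zetaEStar T| ≤ C * T ^ (1/4 + ε : ℝ) := by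
  intro ε hε
  obtain ⟨CR, hCR0, hR⟩ := h ε hε
  obtain ⟨C, hC1, hC⟩ := divisor_bound hε
  obtain ⟨M, hM0, hM⟩ := zetaEStar_crude
  have hπ3 : (3:ℝ) < Real.pi := Real.pi_gt_three
  have hπ4 : Real.pi ≤ 4 := Real.pi_le_four
  set c₂ := |2 * Real.eulerMascheroniConstant - 1| with hc2
  have hc₂0 : 0 ≤ c₂ := abs_nonneg _
  have hC0 : (0:ℝ) ≤ C := by linarith
  -- the big-T coefficient
  set KB : ℝ := (1/ε + 2 + c₂) + 8 * Real.pi * (5 * C * 2 ^ (ε:ℝ) + 4 * (1/ε + 2 + c₂)) with hKB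
  have h2e : (0:ℝ) < 2 ^ (ε:ℝ) := Real.rpow_pos_of_pos (by norm_num) _
  have hKB0 : 0 < KB := by
    have h1 : 0 < 1/ε := by positivity
    rw [hKB]; positivity
  set q : ℝ := 2 ^ (1/2 + ε : ℝ) with hq
  have hq0 : 0 < q := Real.rpow_pos_of_pos (by norm_num) _
  set Kbig : ℝ := 2 * (CR * q) + 3 + KB with hKbig
  have hKbig0 : 0 < Kbig := by positivity
  refine ⟨M + Kbig, by positivity, ?_⟩
  intro T hT2
  have hT0 : (0:ℝ) < T := by linarith
  have hT1 : (1:ℝ) ≤ T := by linarith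
  have hTq1 : (1:ℝ) ≤ T ^ (1/4 + ε : ℝ) := Real.one_le_rpow hT1 (by positivity)
  by_cases hT16 : T ≤ 16
  · -- small T: crude bound
    calc |zetaEStar T| ≤ M := hM T hT2 hT16
      _ ≤ (M + Kbig) * 1 := by linarith
      _ ≤ (M + Kbig) * T ^ (1/4 + ε : ℝ) := by
          apply mul_le_mul_of_nonneg_left hTq1 (by positivity)
  · -- large T
    push_neg at hT16
    have hT16' : (16:ℝ) ≤ T := hT16.le
    set H : ℝ := T ^ (1/4 : ℝ) with hH
    have hH0 : 0 < H := Real.rpow_pos_of_pos hT0 _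
    have hH2 : (2:ℝ) ≤ H := by
      have h1 : (16:ℝ) ^ (1/4 : ℝ) ≤ T ^ (1/4 : ℝ) :=
        Real.rpow_le_rpow (by norm_num) hT16' (by norm_num)
      have h2 : (16:ℝ) ^ (1/4 : ℝ) = 2 := by
        rw [show (16:ℝ) = 2 ^ (4:ℕ) by norm_num, ← Real.rpow_natCast 2 4,
          ← Real.rpow_mul (by norm_num)]
        norm_num
      rw [hH]; linarith
    have hH1 : (1:ℝ) ≤ H := by linarith
    have hH4T : 4 * H ≤ T := by
      have hpow : H ^ (4:ℕ) = T := by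
        rw [hH, ← Real.rpow_natCast (T ^ (1/4:ℝ)) 4, ← Real.rpow_mul hT0.le]
        norm_num
      have h8 : (2:ℝ) ^ (3:ℕ) ≤ H ^ (3:ℕ) := pow_le_pow_left₀ (by norm_num) hH2 3
      nlinarith [hH0]
    have hTH2 : (2:ℝ) ≤ T - H := by linarith
    have hTH12 : (12:ℝ) ≤ T - H := by linarith
    have hTH2T : T + H ≤ 2 * T := by linarith
    -- the oscillation bound B
    set B : ℝ := H * (Real.log (2*T) + 1 + c₂)
      + 2 * Real.pi * (4 * ((4 * H + 1) * (C * (2*T) ^ (ε:ℝ))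
        + 4 * H * (Real.log (2*T) + 1 + c₂))) with hB
    have hlog2T0 : 0 ≤ Real.log (2*T) := Real.log_nonneg (by linarith)
    have hB0 : 0 ≤ B := by rw [hB]; positivity
    -- pointwise oscillation control
    have key : ∀ s t : ℝ, 12 ≤ s → s ≤ t → t - s ≤ H → t ≤ 2*T →
        zetaEStar s - zetaEStar t ≤ B := by
      intro s t hs12 hst htsH ht2T
      have hs0 : (0:ℝ) < s := by linarith
      have h2π : (0:ℝ) < 2 * Real.pi := by positivity
      have h2π8 : 2 * Real.pi ≤ 8 := by linarith
      have h2π6 : 6 ≤ 2 * Real.pi := by linarith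
      -- main-term variation
      have hm1 := m_var hs0 hst
      have hlogt : |Real.log (t / (2*Real.pi))| ≤ Real.log (2*T) := by
        have ht1 : 1 ≤ t / (2*Real.pi) := by
          rw [le_div_iff₀ h2π]; linarith
        rw [abs_of_nonneg (Real.log_nonneg ht1)]
        apply Real.log_le_log (by positivity)
        calc t / (2*Real.pi) ≤ t / 1 := by
              apply div_le_div_of_nonneg_left (by linarith) (by norm_num) (by linarith)
          _ = t := div_one t
          _ ≤ 2 * T := ht2T
      have hm2 : t * (Real.log (t / (2*Real.pi)) + 2 * Real.eulerMascheroniConstant - 1)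
          - s * (Real.log (s / (2*Real.pi)) + 2 * Real.eulerMascheroniConstant - 1)
          ≤ H * (Real.log (2*T) + 1 + c₂) := by
        have := (abs_le.mp hm1).2
        calc t * _ - s * _ ≤ (t - s) * (|Real.log (t / (2*Real.pi))| + 1 + c₂) := this
          _ ≤ H * (Real.log (2*T) + 1 + c₂) := by
              apply mul_le_mul htsH (by linarith) (by positivity) (by linarith)
      -- zetaE part
      have hze : zetaE s - zetaE t ≤ H * (Real.log (2*T) + 1 + c₂) :=
        le_trans (zetaE_sub_le hs0.le hst) hm2
      -- divisor part
      set x := s / (2*Real.pi) with hxd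
      set y := t / (2*Real.pi) with hyd
      have hx1 : 1 ≤ x := by rw [hxd, le_div_iff₀ h2π]; linarith
      have hxy : x ≤ y := by rw [hxd, hyd]; gcongr
      have hyx : y - x ≤ H := by
        rw [hxd, hyd, div_sub_div_same]
        calc (t - s) / (2*Real.pi) ≤ (t - s) / 1 := by
              apply div_le_div_of_nonneg_left (by linarith) (by norm_num) (by linarith)
          _ = t - s := div_one _
          _ ≤ H := htsH
      have h4y2T : 4 * y ≤ 2 * T := by
        rw [hyd]
        rw [show 4 * (t / (2*Real.pi)) = (4*t) / (2*Real.pi) by ring, div_le_iff₀ h2π]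
        nlinarith
      have hds := divDeltaStar_sub_le hε hC0 hC hx1 hxy
      have hds2 : |divDeltaStar y - divDeltaStar x|
          ≤ 4 * ((4 * H + 1) * (C * (2*T) ^ (ε:ℝ))
            + 4 * H * (Real.log (2*T) + 1 + c₂)) := by
        refine le_trans hds ?_
        have hy0 : (0:ℝ) < 4 * y := by linarith
        have hy4log : Real.log (4*y) ≤ Real.log (2*T) :=
          Real.log_le_log hy0 h4y2T
        have hy4rpow : (4*y) ^ (ε:ℝ) ≤ (2*T) ^ (ε:ℝ) :=
          Real.rpow_le_rpow (by linarith) h4y2T hε.le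
        have hyx0 : 0 ≤ y - x := by linarith
        have hylog0 : 0 ≤ Real.log (4*y) := Real.log_nonneg (by linarith)
        gcongr <;> linarith
      -- combine
      have habs := (abs_le.mp hds2).2
      have habs' := (abs_le.mp hds2).1
      have hid : zetaEStar s - zetaEStar t
          = (zetaE s - zetaE t) + 2 * Real.pi * (divDeltaStar y - divDeltaStar x) := by
        unfold zetaEStar
        rw [← hxd, ← hyd]
        ring
      rw [hid, hB]
      have h2 : 2 * Real.pi * (divDeltaStar y - divDeltaStar x)
          ≤ 2 * Real.pi * (4 * ((4 * H + 1) * (C * (2*T) ^ (ε:ℝ))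
            + 4 * H * (Real.log (2*T) + 1 + c₂))) := by
        apply mul_le_mul_of_nonneg_left _ h2π.le
        calc divDeltaStar y - divDeltaStar x ≤ |divDeltaStar y - divDeltaStar x| :=
              le_abs_self _
          _ ≤ _ := hds2
      linarith
    -- integrate on [T, T+H]
    have hup : H * (zetaEStar T - B) ≤ Rerr (T+H) - Rerr T + 3 * Real.pi / 4 * H := by
      have hmono := intervalIntegral.integral_mono_on (μ := volume)
        (f := fun _ => zetaEStar T - B) (g := zetaEStar)
        (by linarith : T ≤ T + H)
        (intervalIntegrable_const) (zetaEStar_II T (T+H))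
        (fun t ht => by
          have h1 := key T t (by linarith) ht.1 (by linarith [ht.2]) (by linarith [ht.2])
          show zetaEStar T - B ≤ zetaEStar t
          linarith)
      rw [intervalIntegral.integral_const, integral_zetaEStar_split] at hmono
      simp only [smul_eq_mul] at hmono
      calc H * (zetaEStar T - B) = (T + H - T) * (zetaEStar T - B) := by ring
        _ ≤ Rerr (T+H) - Rerr T + 3 * Real.pi / 4 * (T + H - T) := hmono
        _ = Rerr (T+H) - Rerr T + 3 * Real.pi / 4 * H := by ring
    -- integrate on [T-H, T]
    have hdn : Rerr T - Rerr (T-H) + 3 * Real.pi / 4 * H ≤ H * (zetaEStar T + B) := by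
      have hmono := intervalIntegral.integral_mono_on (μ := volume)
        (f := zetaEStar) (g := fun _ => zetaEStar T + B)
        (by linarith : T - H ≤ T)
        (zetaEStar_II (T-H) T) (intervalIntegrable_const)
        (fun t ht => by
          have h1 := key t T (by linarith [ht.1]) ht.2 (by linarith [ht.1]) (by linarith)
          show zetaEStar t ≤ zetaEStar T + B
          linarith)
      rw [intervalIntegral.integral_const, integral_zetaEStar_split] at hmono
      simp only [smul_eq_mul] at hmono
      calc Rerr T - Rerr (T-H) + 3 * Real.pi / 4 * H
          = Rerr T - Rerr (T-H) + 3 * Real.pi / 4 * (T - (T - H)) := by ring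
        _ ≤ (T - (T - H)) * (zetaEStar T + B) := hmono
        _ = H * (zetaEStar T + B) := by ring
    -- Rerr bounds
    have hQ : ∀ u : ℝ, 2 ≤ u → u ≤ 2*T → |Rerr u| ≤ CR * (q * T ^ (1/2 + ε : ℝ)) := by
      intro u hu2 hu2T
      calc |Rerr u| ≤ CR * u ^ (1/2 + ε : ℝ) := hR u hu2
        _ ≤ CR * (2*T) ^ (1/2 + ε : ℝ) := by
            apply mul_le_mul_of_nonneg_left _ hCR0.le
            exact Real.rpow_le_rpow (by linarith) hu2T (by positivity)
        _ = CR * (q * T ^ (1/2 + ε : ℝ)) := by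
            rw [Real.mul_rpow (by norm_num) hT0.le, hq]
    have hRp := hQ (T+H) (by linarith) (by linarith)
    have hRm := hQ (T-H) (by linarith) (by linarith)
    have hRT := hQ T (by linarith) (by linarith)
    -- exponent arithmetic
    have hsplit : T ^ (1/2 + ε : ℝ) = H * T ^ (1/4 + ε : ℝ) := by
      rw [hH, ← Real.rpow_add hT0]
      congr 1
      ring
    have hHTe : H * T ^ (ε:ℝ) = T ^ (1/4 + ε : ℝ) := by
      rw [hH, ← Real.rpow_add hT0]
    have hTe1 : (1:ℝ) ≤ T ^ (ε:ℝ) := Real.one_le_rpow hT1 hε.le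
    -- bound B by KB * T^(1/4+ε)
    have hlogB : Real.log (2*T) + 1 + c₂ ≤ T ^ (ε:ℝ) * (1/ε + 2 + c₂) := by
      have h1 : Real.log (2*T) = Real.log 2 + Real.log T :=
        Real.log_mul (by norm_num) hT0.ne'
      have h2 : Real.log 2 ≤ 1 := by
        have := Real.log_le_sub_one_of_pos (by norm_num : (0:ℝ) < 2)
        linarith
      have h3 : Real.log T ≤ T ^ (ε:ℝ) / ε := log_le_rpow_div1 hT0 hε
      have h4 : T ^ (ε:ℝ) / ε = T ^ (ε:ℝ) * (1/ε) := by ring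
      nlinarith [hTe1, hc₂0]
    have hBbound : B ≤ KB * T ^ (1/4 + ε : ℝ) := by
      rw [hB, hKB]
      have ht1 : H * (Real.log (2*T) + 1 + c₂) ≤ (1/ε + 2 + c₂) * T ^ (1/4 + ε : ℝ) := by
        calc H * (Real.log (2*T) + 1 + c₂) ≤ H * (T ^ (ε:ℝ) * (1/ε + 2 + c₂)) := by
              apply mul_le_mul_of_nonneg_left hlogB hH0.le
          _ = (1/ε + 2 + c₂) * (H * T ^ (ε:ℝ)) := by ring
          _ = (1/ε + 2 + c₂) * T ^ (1/4 + ε : ℝ) := by rw [hHTe]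
      have ht2 : (4 * H + 1) * (C * (2*T) ^ (ε:ℝ))
          ≤ 5 * C * 2 ^ (ε:ℝ) * T ^ (1/4 + ε : ℝ) := by
        have h2T : (2*T) ^ (ε:ℝ) = 2 ^ (ε:ℝ) * T ^ (ε:ℝ) :=
          Real.mul_rpow (by norm_num) hT0.le
        calc (4 * H + 1) * (C * (2*T) ^ (ε:ℝ)) ≤ (5 * H) * (C * (2*T) ^ (ε:ℝ)) := by
              apply mul_le_mul_of_nonneg_right (by linarith) (by positivity)
          _ = 5 * C * 2 ^ (ε:ℝ) * (H * T ^ (ε:ℝ)) := by rw [h2T]; ring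
          _ = 5 * C * 2 ^ (ε:ℝ) * T ^ (1/4 + ε : ℝ) := by rw [hHTe]
      have ht3 : 4 * H * (Real.log (2*T) + 1 + c₂)
          ≤ 4 * (1/ε + 2 + c₂) * T ^ (1/4 + ε : ℝ) := by
        calc 4 * H * (Real.log (2*T) + 1 + c₂)
            ≤ 4 * H * (T ^ (ε:ℝ) * (1/ε + 2 + c₂)) := by
              apply mul_le_mul_of_nonneg_left hlogB (by positivity)
          _ = 4 * (1/ε + 2 + c₂) * (H * T ^ (ε:ℝ)) := by ring
          _ = 4 * (1/ε + 2 + c₂) * T ^ (1/4 + ε : ℝ) := by rw [hHTe]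
      have hπ0 : (0:ℝ) < Real.pi := by linarith
      nlinarith [ht1, ht2, ht3, hTq1, hπ0]
    -- assemble
    have hup2 : H * zetaEStar T ≤ 2 * (CR * (q * T ^ (1/2 + ε : ℝ)))
        + 3 * Real.pi / 4 * H + H * B := by
      have h1 := (abs_le.mp hRp).2
      have h2 := (abs_le.mp hRT).1
      nlinarith [hup]
    have hdn2 : - (H * zetaEStar T) ≤ 2 * (CR * (q * T ^ (1/2 + ε : ℝ)))
        + 3 * Real.pi / 4 * H + H * B := by
      have h1 := (abs_le.mp hRm).2
      have h2 := (abs_le.mp hRT).1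
      have hπ0 : (0:ℝ) < Real.pi := by linarith
      nlinarith [hdn]
    have hfinal : H * |zetaEStar T| ≤ H * (Kbig * T ^ (1/4 + ε : ℝ)) := by
      have hrhs : 2 * (CR * (q * T ^ (1/2 + ε : ℝ))) + 3 * Real.pi / 4 * H + H * B
          ≤ H * (Kbig * T ^ (1/4 + ε : ℝ)) := by
        rw [hKbig]
        have e1 : 2 * (CR * (q * T ^ (1/2 + ε : ℝ)))
            = 2 * (CR * q) * (H * T ^ (1/4 + ε : ℝ)) := by
          rw [hsplit]; ring
        have e2 : 3 * Real.pi / 4 * H ≤ 3 * (H * T ^ (1/4 + ε : ℝ)) := by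
          nlinarith [hTq1, hH0]
        have e3 : H * B ≤ KB * (H * T ^ (1/4 + ε : ℝ)) := by
          calc H * B ≤ H * (KB * T ^ (1/4 + ε : ℝ)) :=
                mul_le_mul_of_nonneg_left hBbound hH0.le
            _ = KB * (H * T ^ (1/4 + ε : ℝ)) := by ring
        calc 2 * (CR * (q * T ^ (1/2 + ε : ℝ))) + 3 * Real.pi / 4 * H + H * B
            ≤ 2 * (CR * q) * (H * T ^ (1/4 + ε : ℝ)) + 3 * (H * T ^ (1/4 + ε : ℝ))
              + KB * (H * T ^ (1/4 + ε : ℝ)) := by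
              rw [e1]; linarith [e2, e3]
          _ = H * ((2 * (CR * q) + 3 + KB) * T ^ (1/4 + ε : ℝ)) := by ring
      rcases abs_cases (zetaEStar T) with ⟨he, _⟩ | ⟨he, _⟩ <;> rw [he]
      · linarith [hup2, hrhs]
      · linarith [hdn2, hrhs]
    have := le_of_mul_le_mul_left hfinal hH0
    calc |zetaEStar T| ≤ Kbig * T ^ (1/4 + ε : ℝ) := this
      _ ≤ (M + Kbig) * T ^ (1/4 + ε : ℝ) := by
          apply mul_le_mul_of_nonneg_right _ (by positivity)
          linarith
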